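/- For any prime p, the intersection graph of ℤ_2 × ℤ_2 × ℤ_p (p ≠ 2) is K_{3,3}-free. -/

import Mathlib

namespace K33Aux
variable {p : ℕ}

-- decomposition lemmas, generic subgroup
lemma cast_p (hp : p.Prime) (hp2 : p ≠ 2) : (p : ZMod 2) = 1 := by
  have h := Nat.odd_iff.mp (hp.odd_of_ne_two hp2)
  conv_lhs => rw [← Nat.mod_add_div p 2, h]
  push_cast
  rw [show ((2:ZMod 2)) = 0 by rfl]
  ring

lemma vpart_mem (hp : p.Prime) (hp2 : p ≠ 2) (H : AddSubgroup (ZMod 2 × ZMod 2 × ZMod p))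
    {x y : ZMod 2} {z : ZMod p} (h : (x, y, z) ∈ H) : (x, y, (0 : ZMod p)) ∈ H := by
  have heq : p • ((x, y, z) : ZMod 2 × ZMod 2 × ZMod p) = (x, y, (0:ZMod p)) := by
    simp [Prod.smul_mk, nsmul_eq_mul, cast_p hp hp2, ZMod.natCast_self]
  rw [← heq]
  exact H.nsmul_mem h p

lemma ppart_mem (hp : p.Prime) (hp2 : p ≠ 2) (H : AddSubgroup (ZMod 2 × ZMod 2 × ZMod p))
    {x y : ZMod 2} {z : ZMod p} (h : (x, y, z) ∈ H) : ((0:ZMod 2), (0:ZMod 2), z) ∈ H := by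
  have h2 := H.sub_mem h (vpart_mem hp hp2 H h)
  simpa using h2

lemma pgen (hp : p.Prime) (H : AddSubgroup (ZMod 2 × ZMod 2 × ZMod p))
    (h : ((0:ZMod 2), (0:ZMod 2), (1:ZMod p)) ∈ H) (w : ZMod p) :
    ((0:ZMod 2), (0:ZMod 2), w) ∈ H := by
  haveI : Fact p.Prime := ⟨hp⟩
  have heq : w.val • (((0:ZMod 2), (0:ZMod 2), (1:ZMod p)) : ZMod 2 × ZMod 2 × ZMod p)
      = ((0:ZMod 2), (0:ZMod 2), w) := by
    simp [Prod.smul_mk, nsmul_eq_mul, ZMod.natCast_val, ZMod.cast_id]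
  rw [← heq]
  exact H.nsmul_mem h _

lemma pone (hp : p.Prime) (H : AddSubgroup (ZMod 2 × ZMod 2 × ZMod p))
    {z : ZMod p} (hz : z ≠ 0) (h : ((0:ZMod 2), (0:ZMod 2), z) ∈ H) :
    ((0:ZMod 2), (0:ZMod 2), (1:ZMod p)) ∈ H := by
  haveI : Fact p.Prime := ⟨hp⟩
  have heq : (z⁻¹).val • (((0:ZMod 2), (0:ZMod 2), z) : ZMod 2 × ZMod 2 × ZMod p)
      = ((0:ZMod 2), (0:ZMod 2), (1:ZMod p)) := by
    simp [Prod.smul_mk, nsmul_eq_mul, ZMod.natCast_val, ZMod.cast_id,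
      inv_mul_cancel₀ hz]
  rw [← heq]
  exact H.nsmul_mem h _

lemma mem_iff (hp : p.Prime) (hp2 : p ≠ 2) (H : AddSubgroup (ZMod 2 × ZMod 2 × ZMod p))
    (x y : ZMod 2) (z : ZMod p) :
    (x, y, z) ∈ H ↔ ((x, y, (0:ZMod p)) ∈ H ∧ (z ≠ 0 → ((0:ZMod 2),(0:ZMod 2),(1:ZMod p)) ∈ H)) := by
  constructor
  · intro h
    exact ⟨vpart_mem hp hp2 H h, fun hz => pone hp H hz (ppart_mem hp hp2 H h)⟩
  · rintro ⟨hv, hz⟩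
    rcases eq_or_ne z 0 with rfl | hz0
    · exact hv
    · have := H.add_mem hv (pgen hp H (hz hz0) z)
      simpa using this

lemma sub_ext (hp : p.Prime) (hp2 : p ≠ 2) (H K : AddSubgroup (ZMod 2 × ZMod 2 × ZMod p))
    (hv : ∀ x y : ZMod 2, ((x, y, (0:ZMod p)) ∈ H ↔ (x, y, (0:ZMod p)) ∈ K))
    (hb : (((0:ZMod 2),(0:ZMod 2),(1:ZMod p)) ∈ H ↔ ((0:ZMod 2),(0:ZMod 2),(1:ZMod p)) ∈ K)) :
    H = K := by
  ext ⟨x, y, z⟩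
  rw [mem_iff hp hp2 H, mem_iff hp hp2 K, hv, hb]

def f3 (p : ℕ) : (ZMod 2 × ZMod 2 × ZMod p) →+ ZMod 2 :=
  AddMonoidHom.fst (ZMod 2) (ZMod 2 × ZMod p) +
    (AddMonoidHom.fst (ZMod 2) (ZMod p)).comp (AddMonoidHom.snd (ZMod 2) (ZMod 2 × ZMod p))

def sgP (p : ℕ) : AddSubgroup (ZMod 2 × ZMod 2 × ZMod p) := (⊥ : AddSubgroup (ZMod 2)).prod ((⊥ : AddSubgroup (ZMod 2)).prod ⊤)
def sg1 (p : ℕ) : AddSubgroup (ZMod 2 × ZMod 2 × ZMod p) := (⊤ : AddSubgroup (ZMod 2)).prod ((⊥ : AddSubgroup (ZMod 2)).prod ⊤)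
def sg2 (p : ℕ) : AddSubgroup (ZMod 2 × ZMod 2 × ZMod p) := (⊥ : AddSubgroup (ZMod 2)).prod ((⊤ : AddSubgroup (ZMod 2)).prod ⊤)
def sg3 (p : ℕ) : AddSubgroup (ZMod 2 × ZMod 2 × ZMod p) := (f3 p).ker
def sgV (p : ℕ) : AddSubgroup (ZMod 2 × ZMod 2 × ZMod p) := (⊤ : AddSubgroup (ZMod 2)).prod ((⊤ : AddSubgroup (ZMod 2)).prod ⊥)
def t1 (p : ℕ) : AddSubgroup (ZMod 2 × ZMod 2 × ZMod p) := (⊤ : AddSubgroup (ZMod 2)).prod ⊥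
def t2 (p : ℕ) : AddSubgroup (ZMod 2 × ZMod 2 × ZMod p) := (⊥ : AddSubgroup (ZMod 2)).prod ((⊤ : AddSubgroup (ZMod 2)).prod ⊥)
def t3 (p : ℕ) : AddSubgroup (ZMod 2 × ZMod 2 × ZMod p) := sg3 p ⊓ sgV p

lemma mem_sgP (g : ZMod 2 × ZMod 2 × ZMod p) : g ∈ sgP p ↔ g.1 = 0 ∧ g.2.1 = 0 := by
  simp [sgP, AddSubgroup.mem_prod]
lemma mem_sg1 (g : ZMod 2 × ZMod 2 × ZMod p) : g ∈ sg1 p ↔ g.2.1 = 0 := by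
  simp [sg1, AddSubgroup.mem_prod]
lemma mem_sg2 (g : ZMod 2 × ZMod 2 × ZMod p) : g ∈ sg2 p ↔ g.1 = 0 := by
  simp [sg2, AddSubgroup.mem_prod]
lemma mem_sg3 (g : ZMod 2 × ZMod 2 × ZMod p) : g ∈ sg3 p ↔ g.1 + g.2.1 = 0 := by
  simp [sg3, f3, AddMonoidHom.mem_ker]
lemma mem_sgV (g : ZMod 2 × ZMod 2 × ZMod p) : g ∈ sgV p ↔ g.2.2 = 0 := by
  simp [sgV, AddSubgroup.mem_prod]
lemma mem_t1 (g : ZMod 2 × ZMod 2 × ZMod p) : g ∈ t1 p ↔ g.2.1 = 0 ∧ g.2.2 = 0 := by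
  simp [t1, AddSubgroup.mem_prod, Prod.ext_iff]
lemma mem_t2 (g : ZMod 2 × ZMod 2 × ZMod p) : g ∈ t2 p ↔ g.1 = 0 ∧ g.2.2 = 0 := by
  simp [t2, AddSubgroup.mem_prod]
lemma mem_t3 (g : ZMod 2 × ZMod 2 × ZMod p) : g ∈ t3 p ↔ g.1 + g.2.1 = 0 ∧ g.2.2 = 0 := by
  simp [t3, AddSubgroup.mem_inf, mem_sg3, mem_sgV]

lemma classify (hp : p.Prime) (hp2 : p ≠ 2) (H : AddSubgroup (ZMod 2 × ZMod 2 × ZMod p))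
    (hbot : H ≠ ⊥) (htop : H ≠ ⊤) :
    H = t1 p ∨ H = t2 p ∨ H = t3 p ∨ H = sgP p ∨ H = sg1 p ∨ H = sg2 p ∨ H = sg3 p ∨ H = sgV p := by
  haveI : Fact p.Prime := ⟨hp⟩
  have h0 : (0 : ZMod 2 × ZMod 2 × ZMod p) ∈ H := H.zero_mem
  have honep : (1:ZMod p) ≠ 0 := one_ne_zero
  have hone2 : (1:ZMod 2) ≠ 0 := by decide
  have zc : ∀ x : ZMod 2, x = 0 ∨ x = 1 := by decide
  by_cases h1 : ((1:ZMod 2),(0:ZMod 2),(0:ZMod p)) ∈ H <;>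
  by_cases h2 : ((0:ZMod 2),(1:ZMod 2),(0:ZMod p)) ∈ H
  · have h1n : ((1:ZMod 2), (0 : ZMod 2 × ZMod p)) ∈ H := h1
    -- h1, h2 : derive h3
    have h3 : ((1:ZMod 2),(1:ZMod 2),(0:ZMod p)) ∈ H := by
      have := H.add_mem h1 h2
      simpa [Prod.mk_add_mk] using this
    by_cases hP : ((0:ZMod 2),(0:ZMod 2),(1:ZMod p)) ∈ H
    · exfalso; apply htop
      apply sub_ext hp hp2
      · intro x y
        rcases zc x with rfl|rfl <;> rcases zc y with rfl|rfl <;>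
          simp [h0, h1n, Prod.mk_zero_zero, h2, h3]
      · simp [hP]
    · right; right; right; right; right; right; right
      apply sub_ext hp hp2
      · intro x y
        rcases zc x with rfl|rfl <;> rcases zc y with rfl|rfl <;>
          simp [mem_sgV, h0, h1n, Prod.mk_zero_zero, h2, h3]
      · simp [mem_sgV, hP, honep]
  · have h1n : ((1:ZMod 2), (0 : ZMod 2 × ZMod p)) ∈ H := h1
    have h3 : ¬ ((1:ZMod 2),(1:ZMod 2),(0:ZMod p)) ∈ H := by
      intro h3
      apply h2
      have := H.add_mem h1 h3
      simpa [Prod.mk_add_mk, show (1:ZMod 2)+1 = 0 by decide] using this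
    by_cases hP : ((0:ZMod 2),(0:ZMod 2),(1:ZMod p)) ∈ H
    · right; right; right; right; left
      apply sub_ext hp hp2
      · intro x y
        rcases zc x with rfl|rfl <;> rcases zc y with rfl|rfl <;>
          simp [mem_sg1, h0, h1n, Prod.mk_zero_zero, h2, h3, hone2]
      · simp [mem_sg1, hP]
    · left
      apply sub_ext hp hp2
      · intro x y
        rcases zc x with rfl|rfl <;> rcases zc y with rfl|rfl <;>
          simp [mem_t1, h0, h1n, Prod.mk_zero_zero, h2, h3, hone2]
      · simp [mem_t1, hP, honep]
  · have h1n : ¬ (((1:ZMod 2), (0 : ZMod 2 × ZMod p)) ∈ H) := h1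
    have h3 : ¬ ((1:ZMod 2),(1:ZMod 2),(0:ZMod p)) ∈ H := by
      intro h3
      apply h1
      have := H.add_mem h2 h3
      simpa [Prod.mk_add_mk, show (1:ZMod 2)+1 = 0 by decide] using this
    by_cases hP : ((0:ZMod 2),(0:ZMod 2),(1:ZMod p)) ∈ H
    · right; right; right; right; right; left
      apply sub_ext hp hp2
      · intro x y
        rcases zc x with rfl|rfl <;> rcases zc y with rfl|rfl <;>
          simp [mem_sg2, h0, h1n, Prod.mk_zero_zero, h2, h3, hone2]
      · simp [mem_sg2, hP]
    · right; left
      apply sub_ext hp hp2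
      · intro x y
        rcases zc x with rfl|rfl <;> rcases zc y with rfl|rfl <;>
          simp [mem_t2, h0, h1n, Prod.mk_zero_zero, h2, h3, hone2]
      · simp [mem_t2, hP, honep]
  · have h1n : ¬ (((1:ZMod 2), (0 : ZMod 2 × ZMod p)) ∈ H) := h1
    by_cases h3 : ((1:ZMod 2),(1:ZMod 2),(0:ZMod p)) ∈ H
    · by_cases hP : ((0:ZMod 2),(0:ZMod 2),(1:ZMod p)) ∈ H
      · right; right; right; right; right; right; left
        apply sub_ext hp hp2
        · intro x y
          rcases zc x with rfl|rfl <;> rcases zc y with rfl|rfl <;>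
            simp [mem_sg3, h0, h1n, Prod.mk_zero_zero, h2, h3, hone2, show (1:ZMod 2)+1 = 0 by decide]
        · simp [mem_sg3, hP]
      · right; right; left
        apply sub_ext hp hp2
        · intro x y
          rcases zc x with rfl|rfl <;> rcases zc y with rfl|rfl <;>
            simp [mem_t3, h0, h1n, Prod.mk_zero_zero, h2, h3, hone2, show (1:ZMod 2)+1 = 0 by decide]
        · simp [mem_t3, hP, honep]
    · by_cases hP : ((0:ZMod 2),(0:ZMod 2),(1:ZMod p)) ∈ H
      · right; right; right; left
        apply sub_ext hp hp2
        · intro x y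
          rcases zc x with rfl|rfl <;> rcases zc y with rfl|rfl <;>
            simp [mem_sgP, h0, h1n, Prod.mk_zero_zero, h2, h3, hone2]
        · simp [mem_sgP, hP]
      · exfalso; apply hbot
        apply sub_ext hp hp2
        · intro x y
          rcases zc x with rfl|rfl <;> rcases zc y with rfl|rfl <;>
            simp [AddSubgroup.mem_bot, Prod.ext_iff, h0, h1n, Prod.mk_zero_zero, h2, h3, hone2]
        · simp [AddSubgroup.mem_bot, Prod.ext_iff, hP, honep]

lemma zmod2_cases (x : ZMod 2) : x = 0 ∨ x = 1 := by revert x; decide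

lemma t1_elts (g : ZMod 2 × ZMod 2 × ZMod p) (hg : g ∈ t1 p) :
    g = 0 ∨ g = ((1:ZMod 2),(0:ZMod 2),(0:ZMod p)) := by
  obtain ⟨x, y, z⟩ := g
  rw [mem_t1] at hg
  obtain ⟨hy, hz⟩ := hg
  simp only at hy hz
  subst hy; subst hz
  rcases zmod2_cases x with rfl | rfl
  · left; rfl
  · right; rfl

lemma t2_elts (g : ZMod 2 × ZMod 2 × ZMod p) (hg : g ∈ t2 p) :
    g = 0 ∨ g = ((0:ZMod 2),(1:ZMod 2),(0:ZMod p)) := by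
  obtain ⟨x, y, z⟩ := g
  rw [mem_t2] at hg
  obtain ⟨hx, hz⟩ := hg
  simp only at hx hz
  subst hx; subst hz
  rcases zmod2_cases y with rfl | rfl
  · left; rfl
  · right; rfl

lemma t3_elts (g : ZMod 2 × ZMod 2 × ZMod p) (hg : g ∈ t3 p) :
    g = 0 ∨ g = ((1:ZMod 2),(1:ZMod 2),(0:ZMod p)) := by
  obtain ⟨x, y, z⟩ := g
  rw [mem_t3] at hg
  obtain ⟨hxy, hz⟩ := hg
  simp only at hxy hz
  subst hz
  rcases zmod2_cases x with rfl | rfl <;>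
    rcases zmod2_cases y with rfl | rfl
  · left; rfl
  · exact absurd hxy (show (0:ZMod 2) + 1 ≠ 0 by decide)
  · exact absurd hxy (show (1:ZMod 2) + 0 ≠ 0 by decide)
  · right; rfl

lemma filter1 (hp : p.Prime) (hp2 : p ≠ 2) (H : AddSubgroup (ZMod 2 × ZMod 2 × ZMod p))
    (hbot : H ≠ ⊥) (htop : H ≠ ⊤) (he : ((1:ZMod 2),(0:ZMod 2),(0:ZMod p)) ∈ H) :
    H = t1 p ∨ H = sg1 p ∨ H = sgV p := by
  rcases classify hp hp2 H hbot htop with rfl|rfl|rfl|rfl|rfl|rfl|rfl|rfl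
  · exact Or.inl rfl
  · rw [mem_t2] at he; exact absurd he.1 (show (1:ZMod 2) ≠ 0 by decide)
  · rw [mem_t3] at he; exact absurd he.1 (show (1:ZMod 2) + 0 ≠ 0 by decide)
  · rw [mem_sgP] at he; exact absurd he.1 (show (1:ZMod 2) ≠ 0 by decide)
  · exact Or.inr (Or.inl rfl)
  · rw [mem_sg2] at he; exact absurd he (show (1:ZMod 2) ≠ 0 by decide)
  · rw [mem_sg3] at he; exact absurd he (show (1:ZMod 2) + 0 ≠ 0 by decide)
  · exact Or.inr (Or.inr rfl)

lemma filter2 (hp : p.Prime) (hp2 : p ≠ 2) (H : AddSubgroup (ZMod 2 × ZMod 2 × ZMod p))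
    (hbot : H ≠ ⊥) (htop : H ≠ ⊤) (he : ((0:ZMod 2),(1:ZMod 2),(0:ZMod p)) ∈ H) :
    H = t2 p ∨ H = sg2 p ∨ H = sgV p := by
  rcases classify hp hp2 H hbot htop with rfl|rfl|rfl|rfl|rfl|rfl|rfl|rfl
  · rw [mem_t1] at he; exact absurd he.1 (show (1:ZMod 2) ≠ 0 by decide)
  · exact Or.inl rfl
  · rw [mem_t3] at he; exact absurd he.1 (show (0:ZMod 2) + 1 ≠ 0 by decide)
  · rw [mem_sgP] at he; exact absurd he.2 (show (1:ZMod 2) ≠ 0 by decide)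
  · rw [mem_sg1] at he; exact absurd he (show (1:ZMod 2) ≠ 0 by decide)
  · exact Or.inr (Or.inl rfl)
  · rw [mem_sg3] at he; exact absurd he (show (0:ZMod 2) + 1 ≠ 0 by decide)
  · exact Or.inr (Or.inr rfl)

lemma filter3 (hp : p.Prime) (hp2 : p ≠ 2) (H : AddSubgroup (ZMod 2 × ZMod 2 × ZMod p))
    (hbot : H ≠ ⊥) (htop : H ≠ ⊤) (he : ((1:ZMod 2),(1:ZMod 2),(0:ZMod p)) ∈ H) :
    H = t3 p ∨ H = sg3 p ∨ H = sgV p := by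
  rcases classify hp hp2 H hbot htop with rfl|rfl|rfl|rfl|rfl|rfl|rfl|rfl
  · rw [mem_t1] at he; exact absurd he.1 (show (1:ZMod 2) ≠ 0 by decide)
  · rw [mem_t2] at he; exact absurd he.1 (show (1:ZMod 2) ≠ 0 by decide)
  · exact Or.inl rfl
  · rw [mem_sgP] at he; exact absurd he.1 (show (1:ZMod 2) ≠ 0 by decide)
  · rw [mem_sg1] at he; exact absurd he (show (1:ZMod 2) ≠ 0 by decide)
  · rw [mem_sg2] at he; exact absurd he (show (1:ZMod 2) ≠ 0 by decide)
  · exact Or.inr (Or.inl rfl)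
  · exact Or.inr (Or.inr rfl)

lemma no_t {A B : Fin 3 → AddSubgroup (ZMod 2 × ZMod 2 × ZMod p)}
    (hB : Function.Injective B) (hAB : ∀ i j, A i ≠ B j)
    (hBpr : ∀ j, B j ≠ ⊥ ∧ B j ≠ ⊤)
    (hmeet : ∀ i j, A i ⊓ B j ≠ ⊥) (i : Fin 3) (e : ZMod 2 × ZMod 2 × ZMod p)
    (he : ∀ g ∈ A i, g = 0 ∨ g = e)
    (X Y : AddSubgroup (ZMod 2 × ZMod 2 × ZMod p))
    (hclass : ∀ H, H ≠ ⊥ → H ≠ ⊤ → e ∈ H → H = A i ∨ H = X ∨ H = Y) : False := by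
  have hBe : ∀ j, B j = X ∨ B j = Y := by
    intro j
    obtain ⟨⟨g, hg⟩, hg0⟩ := AddSubgroup.ne_bot_iff_exists_ne_zero.mp (hmeet i j)
    have hgA : g ∈ A i := (AddSubgroup.mem_inf.mp hg).1
    have hgB : g ∈ B j := (AddSubgroup.mem_inf.mp hg).2
    have hge : g = e := by
      rcases he g hgA with h | h
      · exact absurd (Subtype.ext h) hg0
      · exact h
    rcases hclass (B j) (hBpr j).1 (hBpr j).2 (hge ▸ hgB) with h | h | h
    · exact absurd h.symm (hAB i j)
    · exact Or.inl h
    · exact Or.inr h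
  rcases hBe 0 with hb0 | hb0 <;> rcases hBe 1 with hb1 | hb1 <;> rcases hBe 2 with hb2 | hb2 <;>
    first
      | exact absurd (hB (hb0.trans hb1.symm)) (by decide)
      | exact absurd (hB (hb0.trans hb2.symm)) (by decide)
      | exact absurd (hB (hb1.trans hb2.symm)) (by decide)

lemma not_t (hp : p.Prime) (hp2 : p ≠ 2) {A B : Fin 3 → AddSubgroup (ZMod 2 × ZMod 2 × ZMod p)}
    (hB : Function.Injective B) (hAB : ∀ i j, A i ≠ B j)
    (hBpr : ∀ j, B j ≠ ⊥ ∧ B j ≠ ⊤)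
    (hmeet : ∀ i j, A i ⊓ B j ≠ ⊥) (i : Fin 3) :
    A i ≠ t1 p ∧ A i ≠ t2 p ∧ A i ≠ t3 p := by
  refine ⟨fun hAi => ?_, fun hAi => ?_, fun hAi => ?_⟩
  · exact no_t hB hAB hBpr hmeet i _ (fun g hg => t1_elts g (hAi ▸ hg)) (sg1 p) (sgV p)
      (fun H hb ht hm => by rw [hAi]; exact filter1 hp hp2 H hb ht hm)
  · exact no_t hB hAB hBpr hmeet i _ (fun g hg => t2_elts g (hAi ▸ hg)) (sg2 p) (sgV p)
      (fun H hb ht hm => by rw [hAi]; exact filter2 hp hp2 H hb ht hm)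
  · exact no_t hB hAB hBpr hmeet i _ (fun g hg => t3_elts g (hAi ▸ hg)) (sg3 p) (sgV p)
      (fun H hb ht hm => by rw [hAi]; exact filter3 hp hp2 H hb ht hm)

end K33Aux

/-- The intersection graph of an additive group `G` contains no `K₃,₃`
subgraph. -/
def IsK33FreeAdd (G : Type*) [AddGroup G] : Prop :=
  ¬ ∃ A B : Fin 3 → AddSubgroup G,
      Function.Injective A ∧ Function.Injective B ∧
      (∀ i j, A i ≠ B j) ∧
      (∀ i, A i ≠ ⊥ ∧ A i ≠ ⊤) ∧ (∀ i, B i ≠ ⊥ ∧ B i ≠ ⊤) ∧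
      (∀ i j, A i ⊓ B j ≠ ⊥)

/-- for any prime `p ≠ 2`, the intersection graph of
`ℤ₂ × ℤ₂ × ℤ_p` is `K₃,₃`-free. -/
theorem stmt_6 (p : ℕ) (hp : p.Prime) (hp2 : p ≠ 2) :
    IsK33FreeAdd (ZMod 2 × ZMod 2 × ZMod p) := by
  rintro ⟨A, B, hA, hB, hAB, hApr, hBpr, hmeet⟩
  classical
  open K33Aux in
  have hAt := fun i => K33Aux.not_t hp hp2 hB hAB hBpr hmeet i
  have hBt := fun j => K33Aux.not_t hp hp2 (A := B) (B := A) hA (fun i j => (hAB j i).symm)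
      hApr (fun i j => by rw [inf_comm]; exact hmeet j i) j
  set val : Fin 3 ⊕ Fin 3 → AddSubgroup (ZMod 2 × ZMod 2 × ZMod p) := Sum.elim A B with hval
  have hvalinj : Function.Injective val := by
    rintro (i | i) (j | j) h
    · rw [hA h]
    · exact absurd h (hAB i j)
    · exact absurd h.symm (hAB j i)
    · rw [hB h]
  have hrange : ∀ u, ∃ k : Fin 5,
      val u = ![K33Aux.sgP p, K33Aux.sg1 p, K33Aux.sg2 p, K33Aux.sg3 p, K33Aux.sgV p] k := by
    intro u
    have hbot : val u ≠ ⊥ := by rcases u with i | i; exacts [(hApr i).1, (hBpr i).1]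
    have htop : val u ≠ ⊤ := by rcases u with i | i; exacts [(hApr i).2, (hBpr i).2]
    have ht : val u ≠ K33Aux.t1 p ∧ val u ≠ K33Aux.t2 p ∧ val u ≠ K33Aux.t3 p := by
      rcases u with i | i
      · exact hAt i
      · exact hBt i
    rcases K33Aux.classify hp hp2 (val u) hbot htop with h|h|h|h|h|h|h|h
    · exact absurd h ht.1
    · exact absurd h ht.2.1
    · exact absurd h ht.2.2
    · exact ⟨0, h⟩
    · exact ⟨1, h⟩
    · exact ⟨2, h⟩
    · exact ⟨3, h⟩
    · exact ⟨4, h⟩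
  choose φ hφ using hrange
  have hφinj : Function.Injective φ := fun u v h =>
    hvalinj ((hφ u).trans (h ▸ (hφ v).symm))
  have hcard := Fintype.card_le_of_injective φ hφinj
  simp only [Fintype.card_sum, Fintype.card_fin] at hcard
  omega
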